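/- arXiv:2003.12014 — 2 statements merged into one kernel-verified Lean document; each statement's English description precedes it below -/
import Mathlib

section
/- In X_G, for any free ultrafilter p on X and any g ∈ G, the ultrafilter gp = {gP : P ∈ p} is parallel to p; conversely, if p and q are parallel free ultrafilters on X_G then q = gp for some g ∈ G. Hence the parallelity class of p equals the orbit Gp. -/
open Set

/-- A coarse structure on a set `X`. -/
structure CoarseStructure (X : Type*) where
  sets : Set (Set (X × X))
  diagonal_mem : ∀ E ∈ sets, ∀ x : X, (x, x) ∈ E
  comp_mem : ∀ E ∈ sets, ∀ E' ∈ sets,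
    {q : X × X | ∃ z : X, (q.1, z) ∈ E ∧ (z, q.2) ∈ E'} ∈ sets
  inv_mem : ∀ E ∈ sets, {q : X × X | (q.2, q.1) ∈ E} ∈ sets
  subset_mem : ∀ E ∈ sets, ∀ E', E' ⊆ E → (∀ x : X, (x, x) ∈ E') → E' ∈ sets
  covers : ⋃₀ sets = Set.univ

/-- The ball `E[A]`. -/
def ball {X : Type*} (E : Set (X × X)) (A : Set X) : Set X := {y | ∃ a ∈ A, (a, y) ∈ E}

/-- A bounded subset of a coarse space. -/
def CoarseStructure.Bounded {X : Type*} (C : CoarseStructure X) (B : Set X) : Prop :=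
  ∃ E ∈ C.sets, ∃ x : X, B ⊆ ball E {x}

/-- A finitary coarse space: uniformly finite balls. -/
def CoarseStructure.Finitary {X : Type*} (C : CoarseStructure X) : Prop :=
  ∀ E ∈ C.sets, ∃ n : ℕ, ∀ x : X, (ball E {x}).Finite ∧ (ball E {x}).ncard < n

/-- The set `X^♯` of ultrafilters all of whose members are unbounded. -/
def CoarseStructure.Sharp {X : Type*} (C : CoarseStructure X) : Set (Ultrafilter X) :=
  {p | ∀ P ∈ p, ¬ C.Bounded P}

/-- The parallelity relation on ultrafilters. -/
def CoarseStructure.Parallel {X : Type*} (C : CoarseStructure X) (p q : Ultrafilter X) : Prop :=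
  ∃ E ∈ C.sets, ∀ P ∈ p, ball E P ∈ q

/-- The entourage determined by a set of permutations. -/
def entourage {X : Type*} (F : Set (Equiv.Perm X)) : Set (X × X) :=
  {q | ∃ g ∈ F, q.2 = g q.1}

/-- The finitary coarse structure `X_G` determined by a group `G` of permutations of `X`:
its entourages are the diagonal-containing subsets of `{(x,gx) : x ∈ X, g ∈ F}`
for finite `F ⊆ G` with `id ∈ F`. -/
def XGsets {X : Type*} (G : Subgroup (Equiv.Perm X)) : Set (Set (X × X)) :=
  {E | (∀ x : X, (x, x) ∈ E) ∧ ∃ F : Finset (Equiv.Perm X),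
    (1 : Equiv.Perm X) ∈ F ∧ ↑F ⊆ (G : Set (Equiv.Perm X)) ∧ E ⊆ entourage ↑F}

/-- A free ultrafilter. -/
def IsFree {X : Type*} (p : Ultrafilter X) : Prop := (p : Filter X) ≤ Filter.cofinite

/-- `X*`, the space of free ultrafilters with the Stone topology. -/
def FreeUF (X : Type*) : Type _ := {p : Ultrafilter X // IsFree p}

instance (X : Type*) : TopologicalSpace (FreeUF X) :=
  instTopologicalSpaceSubtype

/-- The orbit `Gp` of an ultrafilter under the induced action `gp = {gP : P ∈ p}`. -/
def ufOrbit {X : Type*} (G : Subgroup (Equiv.Perm X)) (p : Ultrafilter X) :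
    Set (Ultrafilter X) :=
  {q | ∃ g ∈ G, q = Ultrafilter.map (⇑g) p}

/-- The `p`-companion `Δ_p(A) = A* ∩ Gp`. -/
def compan {X : Type*} (G : Subgroup (Equiv.Perm X)) (p : Ultrafilter X) (A : Set X) :
    Set (Ultrafilter X) :=
  {q | A ∈ q ∧ q ∈ ufOrbit G p}

/-- Large subsets of `X_G`. -/
def IsLarge {X : Type*} (G : Subgroup (Equiv.Perm X)) (A : Set X) : Prop :=
  ∃ E ∈ XGsets G, ball E A = Set.univ

/-- Thick subsets of `X_G`. -/
def IsThick {X : Type*} (G : Subgroup (Equiv.Perm X)) (A : Set X) : Prop :=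
  ∀ E ∈ XGsets G, ∃ a ∈ A, ball E {a} ⊆ A

/-- Thin (discrete) subsets of `X_G`. -/
def IsThin {X : Type*} (G : Subgroup (Equiv.Perm X)) (A : Set X) : Prop :=
  ∀ E ∈ XGsets G, ∃ B : Set X, B.Finite ∧ ∀ a ∈ A \ B, ball E {a} ∩ A = {a}

/-- Sparse subsets of `X_G`. -/
def IsSparse {X : Type*} (G : Subgroup (Equiv.Perm X)) (A : Set X) : Prop :=
  ∀ p : Ultrafilter X, IsFree p → (compan G p A).Finite

/-- Scattered subsets of `X_G`. -/
def IsScattered {X : Type*} (G : Subgroup (Equiv.Perm X)) (A : Set X) : Prop :=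
  ∀ Y ⊆ A, Y.Infinite →
    ∃ p : Ultrafilter X, IsFree p ∧ Y ∈ p ∧ (compan G p Y).Finite

/-- Close subsets of a coarse space. -/
def CoarseStructure.Close {X : Type*} (C : CoarseStructure X) (A B : Set X) : Prop :=
  ∃ E ∈ C.sets, A ⊆ ball E B ∧ B ⊆ ball E A

/-- Close subsets of `X_G`. -/
def CloseG {X : Type*} (G : Subgroup (Equiv.Perm X)) (A B : Set X) : Prop :=
  ∃ E ∈ XGsets G, A ⊆ ball E B ∧ B ⊆ ball E A

/-- Linked subsets of `X_G`. -/
def LinkedG {X : Type*} (G : Subgroup (Equiv.Perm X)) (A B : Set X) : Prop :=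
  (A.Finite ∧ B.Finite) ∨
    ∃ A' ⊆ A, ∃ B' ⊆ B, A'.Infinite ∧ B'.Infinite ∧ CloseG G A' B'


open Set

/-- The `n`-th block `{g_0^{ε_0} ⋯ g_n^{ε_n} x_n : ε_i ∈ {0,1}}`. -/
def pwBlock {X : Type*} (g : ℕ → Equiv.Perm X) (x : ℕ → X) (n : ℕ) : Set X :=
  {y | ∃ ε : Fin (n + 1) → Bool,
    y = ((List.ofFn fun i : Fin (n + 1) =>
      (g i) ^ (if ε i then 1 else 0)).prod : Equiv.Perm X) (x n)}

/-- A piece-wise shifted FP-set determined by the group `G`. -/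
def IsPWShiftedFP {X : Type*} (G : Subgroup (Equiv.Perm X)) (Y : Set X) : Prop :=
  ∃ g : ℕ → Equiv.Perm X, ∃ x : ℕ → X,
    (∀ n, g n ∈ G) ∧
    (∀ m n, m ≠ n → Disjoint (pwBlock g x m) (pwBlock g x n)) ∧
    (∀ n, (pwBlock g x n).ncard = 2 ^ (n + 1)) ∧
    Y = ⋃ n, pwBlock g x n

/-- The group of all self-homeomorphisms of a topological space, as a subgroup
of the permutation group. -/
def homeoSubgroup (X : Type*) [TopologicalSpace X] : Subgroup (Equiv.Perm X) where
  carrier := {g | Continuous g ∧ Continuous g.symm}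
  one_mem' := ⟨continuous_id, continuous_id⟩
  mul_mem' := by
    rintro a b ⟨ha1, ha2⟩ ⟨hb1, hb2⟩
    refine ⟨?_, ?_⟩
    · simpa [Equiv.Perm.mul_def, Equiv.coe_trans] using ha1.comp hb1
    · simpa [Equiv.Perm.mul_def, Equiv.symm_trans_apply] using (hb2.comp ha2 : _)
  inv_mem' := by
    rintro a ⟨ha1, ha2⟩
    exact ⟨ha2, by first | exact ha1 | simpa [Equiv.Perm.inv_def] using ha1⟩


/-- The parallelity relation on ultrafilters over the coarse space `X_G`. -/
def ParallelG {X : Type*} (G : Subgroup (Equiv.Perm X)) (p q : Ultrafilter X) : Prop :=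
  ∃ E ∈ XGsets G, ∀ P ∈ p, ball E P ∈ q

/-- Linked subsets of a coarse space. -/
def CoarseStructure.Linked {X : Type*} (C : CoarseStructure X) (A B : Set X) : Prop :=
  (C.Bounded A ∧ C.Bounded B) ∨
    ∃ A' ⊆ A, ∃ B' ⊆ B, ¬ C.Bounded A' ∧ ¬ C.Bounded B' ∧ C.Close A' B'

/-- The orbit `Gp` viewed as a subset of the space `X*` of free ultrafilters. -/
def freeOrbit {X : Type*} (G : Subgroup (Equiv.Perm X)) (p : Ultrafilter X) :
    Set (FreeUF X) :=
  {q | q.1 ∈ ufOrbit G p}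

open scoped Classical

private lemma entG_mem {X : Type*} (G : Subgroup (Equiv.Perm X)) {g : Equiv.Perm X}
    (hg : g ∈ G) : entourage (↑({1, g} : Finset (Equiv.Perm X))) ∈ XGsets G := by
  refine ⟨fun x => ⟨1, by simp, by simp⟩, {1, g}, by simp, ?_, subset_rfl⟩
  intro h hh
  simp only [Finset.coe_insert, Finset.coe_singleton, Set.mem_insert_iff,
    Set.mem_singleton_iff] at hh
  rcases hh with rfl | rfl
  · exact G.one_mem
  · exact hg

private lemma image_subset_ballG {X : Type*} (g : Equiv.Perm X) (P : Set X) :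
    ⇑g '' P ⊆ ball (entourage (↑({1, g} : Finset (Equiv.Perm X)))) P := by
  rintro y ⟨a, ha, rfl⟩
  exact ⟨a, ha, g, by simp, rfl⟩

/-- If `p ∥ q` in `X_G` then `q = gp` for some `g ∈ G`. -/
private lemma parallel_imp_orbit {X : Type*} (G : Subgroup (Equiv.Perm X))
    (p q : Ultrafilter X) (hpq : ParallelG G p q) :
    ∃ g ∈ G, q = Ultrafilter.map (⇑g) p := by
  obtain ⟨E, ⟨hdiag, F, h1F, hFG, hEF⟩, hball⟩ := hpq
  have key : ∃ g ∈ F, ∀ P ∈ p, ⇑g '' P ∈ q := by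
    by_contra hcon
    push_neg at hcon
    choose P hP hnq using hcon
    have hQ : (⋂ g : {x // x ∈ F}, P g g.2) ∈ p :=
      Filter.iInter_mem.mpr fun g => hP g g.2
    have hbQ : ball E (⋂ g : {x // x ∈ F}, P g g.2) ∈ q := hball _ hQ
    have hR : (⋂ g : {x // x ∈ F}, (⇑(g : Equiv.Perm X) '' P g g.2)ᶜ) ∈ q :=
      Filter.iInter_mem.mpr fun g => (Ultrafilter.compl_mem_iff_notMem).mpr (hnq g g.2)
    obtain ⟨x, hx1, hx2⟩ := Ultrafilter.nonempty_of_mem (q.inter_mem hbQ hR)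
    obtain ⟨a, ha, haE⟩ := hx1
    obtain ⟨g, hgF, hxg⟩ := hEF haE
    have : x ∈ ⇑g '' P g hgF := ⟨a, Set.mem_iInter.mp ha ⟨g, hgF⟩, hxg.symm⟩
    exact Set.mem_iInter.mp hx2 ⟨g, hgF⟩ this
  obtain ⟨g, hgF, hg⟩ := key
  refine ⟨g, hFG hgF, ?_⟩
  have hle : (q : Filter X) ≤ (Ultrafilter.map (⇑g) p : Filter X) := by
    intro Q hQ
    have : ⇑g ⁻¹' Q ∈ p := Ultrafilter.mem_map.mp hQ
    have := hg _ this
    rwa [Set.image_preimage_eq _ g.surjective] at this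
  exact Ultrafilter.coe_le_coe.mp hle

/-- In `X_G`, for each free ultrafilter `p` and `g ∈ G`, `gp ∥ p`;
conversely, if `q` is a free ultrafilter parallel to `p` then `q = gp` for some
`g ∈ G`; hence the parallelity class of `p` is the orbit `Gp`. -/
theorem parallel_class_eq_orbit {X : Type*} [Infinite X] (G : Subgroup (Equiv.Perm X))
    (p : Ultrafilter X) (hp : IsFree p) :
    (∀ g ∈ G, ParallelG G (Ultrafilter.map (⇑g) p) p) ∧
    (∀ q : Ultrafilter X, IsFree q → ParallelG G p q →
      ∃ g ∈ G, q = Ultrafilter.map (⇑g) p) ∧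
    {q : Ultrafilter X | IsFree q ∧ ParallelG G p q} = ufOrbit G p := by
  have hpar : ∀ g ∈ G, ParallelG G p (Ultrafilter.map (⇑g) p) := by
    intro g hg
    refine ⟨entourage (↑({1, g} : Finset (Equiv.Perm X))), entG_mem G hg, ?_⟩
    intro P hP
    have h1 : ⇑g '' P ∈ Ultrafilter.map (⇑g) p := by
      rw [Ultrafilter.mem_map]
      exact Filter.mem_of_superset hP (Set.subset_preimage_image _ _)
    exact Filter.mem_of_superset h1 (image_subset_ballG g P)
  have hfree : ∀ g ∈ G, IsFree (Ultrafilter.map (⇑g) p) := by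
    intro g hg s hs
    rw [Ultrafilter.mem_coe, Ultrafilter.mem_map]
    apply hp
    rw [Filter.mem_cofinite] at hs ⊢
    rw [← Set.preimage_compl]
    exact hs.preimage (g.injective.injOn)
  refine ⟨?_, ?_, ?_⟩
  · intro g hg
    refine ⟨entourage (↑({1, g⁻¹} : Finset (Equiv.Perm X))), entG_mem G (G.inv_mem hg), ?_⟩
    intro P hP
    have h1 : ⇑g ⁻¹' P ∈ p := Ultrafilter.mem_map.mp hP
    refine Filter.mem_of_superset h1 ?_
    intro x hx
    exact ⟨g x, hx, g⁻¹, by simp, by simp⟩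
  · intro q _ hpq
    exact parallel_imp_orbit G p q hpq
  · ext q
    constructor
    · rintro ⟨_, hpq⟩
      obtain ⟨g, hg, rfl⟩ := parallel_imp_orbit G p q hpq
      exact ⟨g, hg, rfl⟩
    · rintro ⟨g, hg, rfl⟩
      exact ⟨hfree g hg, hpar g hg⟩
end

section
/- For a finitary coarse space X_G the following are equivalent: (1) X_G is indiscrete (has no infinite discrete subset); (2) for every infinite A ⊆ X there exist a free ultrafilter p and g ∈ G such that A ∈ p, A ∈ gp, and p ≠ gp; (3) no infinite subset A of X is sparse. -/
open Set

open Set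

section IndiscreteAux

open Filter

variable {X : Type*}

private lemma isFree_map {g : Equiv.Perm X} {p : Ultrafilter X} (hp : IsFree p) :
    IsFree (Ultrafilter.map (⇑g) p) := by
  intro s hs
  rw [Ultrafilter.mem_coe, Ultrafilter.mem_map]
  apply hp
  rw [Filter.mem_cofinite] at hs ⊢
  rw [← Set.preimage_compl]
  exact hs.preimage g.injective.injOn

private lemma exists_free_ultrafilter_of_infinite {Y : Set X} (hY : Y.Infinite) :
    ∃ p : Ultrafilter X, IsFree p ∧ Y ∈ p := by
  have hne : (Filter.cofinite ⊓ Filter.principal Y).NeBot := by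
    rw [Filter.inf_principal_neBot_iff]
    intro U hU
    rw [Filter.mem_cofinite] at hU
    have h2 := (hY.diff hU).nonempty
    rwa [Set.diff_compl, Set.inter_comm] at h2
  refine ⟨Ultrafilter.of (Filter.cofinite ⊓ Filter.principal Y), ?_, ?_⟩
  · exact (Ultrafilter.of_le _).trans inf_le_left
  · exact (Ultrafilter.of_le _) (Filter.mem_inf_of_right (Filter.mem_principal_self Y))

private lemma map_eq_of_fixed {g : Equiv.Perm X} {p : Ultrafilter X}
    (h : {x | g x = x} ∈ p) : Ultrafilter.map (⇑g) p = p := by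
  refine Ultrafilter.coe_injective (Filter.ext fun s => ?_)
  rw [Ultrafilter.coe_map, Filter.mem_map]
  constructor
  · intro hs
    refine Filter.mem_of_superset (Filter.inter_mem hs h) ?_
    rintro x ⟨hx1, hx2⟩
    simp only [Set.mem_preimage] at hx1
    simp only [Set.mem_setOf_eq] at hx2
    rwa [hx2] at hx1
  · intro hs
    refine Filter.mem_of_superset (Filter.inter_mem hs h) ?_
    rintro x ⟨hx1, hx2⟩
    simp only [Set.mem_setOf_eq] at hx2
    simp only [Set.mem_preimage]
    rwa [hx2]

private lemma greedy (K : Finset (Equiv.Perm X)) {S : Set X} (hS : S.Infinite)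
    (hpt : ∀ x ∈ S, ∀ σ ∈ K, ∀ τ ∈ K, σ ≠ τ → σ x ≠ τ x) :
    ∃ S' : Set X, S' ⊆ S ∧ S'.Infinite ∧
      ∀ σ ∈ K, ∀ τ ∈ K, σ ≠ τ → Disjoint ((⇑σ) '' S') ((⇑τ) '' S') := by
  classical
  set Bad : Finset X → Finset X := fun B =>
    B ∪ K.biUnion fun σ => K.biUnion fun τ => B.image fun b => σ⁻¹ (τ b) with hBad
  have hpick : ∀ B : Finset X, ∃ x ∈ S, x ∉ Bad B := fun B => hS.exists_notMem_finset (Bad B)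
  choose pick hpickS hpickBad using hpick
  set F : ℕ → Finset X := fun n => (fun B => insert (pick B) B)^[n] ∅ with hF
  set y : ℕ → X := fun n => pick (F n) with hy
  have hFsucc : ∀ n, F (n + 1) = insert (y n) (F n) := fun n => Function.iterate_succ_apply' _ _ _
  have hmono : ∀ m n, m ≤ n → F m ⊆ F n := fun m n h =>
    monotone_nat_of_le_succ (fun k => by rw [hFsucc]; exact Finset.subset_insert _ _) h
  have hmemF : ∀ m n, m < n → y m ∈ F n := by
    intro m n h
    have h1 : y m ∈ F (m + 1) := by rw [hFsucc]; exact Finset.mem_insert_self _ _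
    exact hmono _ _ h h1
  have hyS : ∀ n, y n ∈ S := fun n => hpickS _
  have hFBad : ∀ B, B ⊆ Bad B := fun B => Finset.subset_union_left
  have hkey : ∀ m n, m < n → ∀ σ ∈ K, ∀ τ ∈ K, σ (y n) ≠ τ (y m) := by
    intro m n h σ hσ τ hτ heq
    apply hpickBad (F n)
    have h2 : y n = σ⁻¹ (τ (y m)) := by rw [← heq]; simp
    refine Finset.mem_union_right _ ?_
    exact Finset.mem_biUnion.mpr ⟨σ, hσ,
      Finset.mem_biUnion.mpr ⟨τ, hτ, Finset.mem_image.mpr ⟨y m, hmemF m n h, h2.symm⟩⟩⟩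
  have hinj : Function.Injective y := by
    intro m n h
    by_contra hne
    rcases Nat.lt_or_ge m n with h1 | h1
    · have h3 := hmemF m n h1
      rw [h] at h3
      exact hpickBad (F n) (hFBad _ h3)
    · have h2 : n < m := lt_of_le_of_ne h1 (Ne.symm hne)
      have h3 := hmemF n m h2
      rw [← h] at h3
      exact hpickBad (F m) (hFBad _ h3)
  refine ⟨Set.range y, ?_, Set.infinite_range_of_injective hinj, ?_⟩
  · rintro _ ⟨n, rfl⟩; exact hyS n
  · intro σ hσ τ hτ hne
    rw [Set.disjoint_left]
    rintro z ⟨x, ⟨m, rfl⟩, rfl⟩ ⟨x', ⟨n, rfl⟩, heq⟩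
    rcases lt_trichotomy m n with h | h | h
    · exact hkey m n h τ hτ σ hσ heq
    · subst h; exact hpt (y m) (hyS m) σ hσ τ hτ hne heq.symm
    · exact hkey n m h σ hσ τ hτ heq.symm

private lemma exists_free_ultrafilter_forall {D : ℕ → Set X} (hinf : ∀ n, (D n).Infinite)
    (hmono : ∀ n, D (n + 1) ⊆ D n) :
    ∃ p : Ultrafilter X, IsFree p ∧ ∀ n, D n ∈ p := by
  classical
  have hmono' : ∀ m n, m ≤ n → D n ⊆ D m := fun m n h =>
    antitone_nat_of_succ_le hmono h
  have hpick : ∀ (n : ℕ) (B : Finset X), ∃ x ∈ D n, x ∉ B :=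
    fun n B => (hinf n).exists_notMem_finset B
  choose pick hpickD hpickB using hpick
  set F : ℕ → Finset X := fun n =>
    Nat.rec ∅ (fun k B => insert (pick k B) B) n with hF
  set y : ℕ → X := fun n => pick n (F n) with hy
  have hFsucc : ∀ n, F (n + 1) = insert (y n) (F n) := fun n => rfl
  have hmonoF : ∀ m n, m ≤ n → F m ⊆ F n := fun m n h =>
    monotone_nat_of_le_succ (fun k => by rw [hFsucc]; exact Finset.subset_insert _ _) h
  have hmemF : ∀ m n, m < n → y m ∈ F n := by
    intro m n h
    have h1 : y m ∈ F (m + 1) := by rw [hFsucc]; exact Finset.mem_insert_self _ _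
    exact hmonoF _ _ h h1
  have hinj : Function.Injective y := by
    intro m n h
    by_contra hne
    rcases Nat.lt_or_ge m n with h1 | h1
    · have h3 := hmemF m n h1
      rw [h] at h3
      exact hpickB n (F n) h3
    · have h2 : n < m := lt_of_le_of_ne h1 (Ne.symm hne)
      have h3 := hmemF n m h2
      rw [← h] at h3
      exact hpickB m (F m) h3
  obtain ⟨p, hfree, hYp⟩ :=
    exists_free_ultrafilter_of_infinite (Set.infinite_range_of_injective (f := y) hinj)
  refine ⟨p, hfree, fun n => ?_⟩
  have hcompl : (↑(Finset.image y (Finset.range n)) : Set X)ᶜ ∈ p :=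
    hfree ((Finset.finite_toSet _).compl_mem_cofinite)
  have hsub : Set.range y ∩ (↑(Finset.image y (Finset.range n)) : Set X)ᶜ ⊆ D n := by
    rintro x ⟨⟨m, rfl⟩, hx2⟩
    have hmn : n ≤ m := by
      by_contra hcon
      push_neg at hcon
      exact hx2 (Finset.mem_coe.mpr (Finset.mem_image.mpr ⟨m, Finset.mem_range.mpr hcon, rfl⟩))
    exact hmono' n m hmn (hpickD m (F m))
  exact Filter.mem_of_superset (Filter.inter_mem hYp hcompl) hsub

private lemma notThin_extract {G : Subgroup (Equiv.Perm X)} {B : Set X}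
    (h : ¬ IsThin G B) :
    ∃ g : Equiv.Perm X, g ∈ G ∧ {a | a ∈ B ∧ g a ∈ B ∧ g a ≠ a}.Infinite := by
  rw [IsThin] at h
  push_neg at h
  obtain ⟨E, hE, hbad⟩ := h
  obtain ⟨hdiag, F, h1F, hFG, hEF⟩ := hE
  have hBadInf : {a | a ∈ B ∧ ∃ g ∈ F, g a ∈ B ∧ g a ≠ a}.Infinite := by
    by_contra hfin
    rw [Set.not_infinite] at hfin
    obtain ⟨a, ha, hne⟩ := hbad _ hfin
    have haB : a ∈ B := ha.1
    have hmem : a ∈ ball E ({a} : Set X) ∩ B := ⟨⟨a, Set.mem_singleton a, hdiag a⟩, haB⟩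
    have hss : ({a} : Set X) ⊂ ball E {a} ∩ B :=
      (Set.singleton_subset_iff.mpr hmem).ssubset_of_ne (Ne.symm hne)
    obtain ⟨y, hy, hya⟩ := Set.exists_of_ssubset hss
    obtain ⟨a', ha', haE⟩ := hy.1
    rw [Set.mem_singleton_iff] at ha'
    subst ha'
    obtain ⟨g, hgF, hyg⟩ := hEF haE
    refine ha.2 ⟨haB, g, hgF, ?_⟩
    rw [← hyg]
    exact ⟨hy.2, fun hc => hya (Set.mem_singleton_iff.mpr hc)⟩
  by_contra hcon
  push_neg at hcon
  apply hBadInf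
  have hsub : {a | a ∈ B ∧ ∃ g ∈ F, g a ∈ B ∧ g a ≠ a} ⊆
      ⋃ g ∈ (F : Set (Equiv.Perm X)), {a | a ∈ B ∧ g a ∈ B ∧ g a ≠ a} := by
    rintro a ⟨haB, g, hgF, hg⟩
    exact Set.mem_biUnion (Finset.mem_coe.mpr hgF) ⟨haB, hg⟩
  exact (Set.Finite.biUnion F.finite_toSet fun g hg =>
    hcon g (hFG hg)).subset hsub

/-- Invariant for the recursive construction in (1) → (3). -/
private def InvP {X : Type*} (G : Subgroup (Equiv.Perm X)) (A : Set X)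
    (L : Finset (Equiv.Perm X)) (D : Set X) : Prop :=
  D.Infinite ∧ D ⊆ A ∧ (∀ σ ∈ L, σ ∈ G) ∧ (∀ σ ∈ L, (⇑σ) '' D ⊆ A) ∧
  ∀ σ τ : Equiv.Perm X, (σ = 1 ∨ σ ∈ L) → (τ = 1 ∨ τ ∈ L) → σ ≠ τ →
    Disjoint ((⇑σ) '' D) ((⇑τ) '' D)

private lemma step_lemma {G : Subgroup (Equiv.Perm X)} {A : Set X}
    (h1 : ∀ B : Set X, B.Infinite → ¬ IsThin G B)
    {L : Finset (Equiv.Perm X)} {D : Set X} (hInv : InvP G A L D) :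
    ∃ t : Equiv.Perm X × Finset (Equiv.Perm X) × Set X, t.1 ∈ G ∧ t.1 ∉ L ∧ t.2.2 ⊆ D ∧
      (∀ σ, σ ∈ t.2.1 ↔ σ = t.1 ∨ σ ∈ L) ∧ InvP G A t.2.1 t.2.2 := by
  classical
  obtain ⟨hDinf, hDA, hLG, hLA, hdisj⟩ := hInv
  obtain ⟨g, hgG, hinf⟩ := notThin_extract (h1 D hDinf)
  set D₁ : Set X := {a | a ∈ D ∧ g a ∈ D ∧ g a ≠ a} with hD₁
  have hD₁D : D₁ ⊆ D := fun a ha => ha.1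
  -- pointwise distinctness of g from the old maps
  have hgnew : ∀ x ∈ D₁, ∀ σ : Equiv.Perm X, (σ = 1 ∨ σ ∈ L) → g x ≠ σ x := by
    intro x hx σ hσ
    by_cases h1σ : σ = 1
    · subst h1σ
      simpa using hx.2.2
    · rcases hσ with rfl | hσL
      · exact absurd rfl h1σ
      · have hd := hdisj 1 σ (Or.inl rfl) (Or.inr hσL) (Ne.symm h1σ)
        intro heq
        have hgx : g x ∈ (⇑(1 : Equiv.Perm X)) '' D := by
          simpa using hx.2.1
        have hσx : g x ∈ (⇑σ) '' D := heq ▸ Set.mem_image_of_mem _ hx.1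
        exact Set.disjoint_left.mp hd hgx hσx
  set K : Finset (Equiv.Perm X) := insert g (insert 1 L) with hK
  have hmemK : ∀ σ : Equiv.Perm X, σ ∈ K ↔ σ = g ∨ σ = 1 ∨ σ ∈ L := by
    intro σ; simp [hK, Finset.mem_insert]
  have hpt : ∀ x ∈ D₁, ∀ σ ∈ K, ∀ τ ∈ K, σ ≠ τ → σ x ≠ τ x := by
    intro x hx σ hσ τ hτ hne
    rw [hmemK] at hσ hτ
    rcases hσ with rfl | hσ
    · rcases hτ with rfl | hτ
      · exact absurd rfl hne
      · exact hgnew x hx τ hτ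
    · rcases hτ with rfl | hτ
      · exact fun h => hgnew x hx σ hσ h.symm
      · intro heq
        have hd := hdisj σ τ hσ hτ hne
        exact Set.disjoint_left.mp hd (Set.mem_image_of_mem _ (hD₁D hx))
          (heq ▸ Set.mem_image_of_mem _ (hD₁D hx))
  obtain ⟨D', hD'S, hD'inf, hD'disj⟩ := greedy K hinf hpt
  have hD'D : D' ⊆ D := hD'S.trans hD₁D
  have hgL : g ∉ L := by
    obtain ⟨x, hx⟩ := hinf.nonempty
    intro hgL
    exact hgnew x hx g (Or.inr hgL) rfl
  refine ⟨(g, insert g L, D'), hgG, hgL, hD'D, fun σ => Finset.mem_insert,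
    hD'inf, hD'D.trans hDA, ?_, ?_, ?_⟩
  · intro σ hσ
    rcases Finset.mem_insert.mp hσ with rfl | hσ
    · exact hgG
    · exact hLG σ hσ
  · intro σ hσ
    rcases Finset.mem_insert.mp hσ with rfl | hσ
    · rintro _ ⟨x, hx, rfl⟩
      exact hDA ((hD'S hx).2.1)
    · exact (Set.image_mono hD'D).trans (hLA σ hσ)
  · intro σ τ hσ hτ hne
    have hσK : σ ∈ K := by
      rw [hmemK]
      rcases hσ with rfl | hσ
      · exact Or.inr (Or.inl rfl)
      · rcases Finset.mem_insert.mp hσ with rfl | hσ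
        · exact Or.inl rfl
        · exact Or.inr (Or.inr hσ)
    have hτK : τ ∈ K := by
      rw [hmemK]
      rcases hτ with rfl | hτ
      · exact Or.inr (Or.inl rfl)
      · rcases Finset.mem_insert.mp hτ with rfl | hτ
        · exact Or.inl rfl
        · exact Or.inr (Or.inr hτ)
    exact hD'disj σ hσK τ hτK hne

end IndiscreteAux

/-- TFAE for a finitary coarse space `X_G`: (1) `X_G` is indiscrete;
(2) for every infinite `A ⊆ X` there are a free ultrafilter `p` and `g ∈ G` with
`A ∈ p`, `A ∈ gp` and `gp ≠ p`; (3) no infinite subset of `X` is sparse. -/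
theorem indiscrete_tfae {X : Type*} [Infinite X] (G : Subgroup (Equiv.Perm X)) :
    List.TFAE [
      ∀ A : Set X, A.Infinite → ¬ IsThin G A,
      ∀ A : Set X, A.Infinite → ∃ p : Ultrafilter X, IsFree p ∧ ∃ g ∈ G,
        A ∈ p ∧ A ∈ Ultrafilter.map (⇑g) p ∧ Ultrafilter.map (⇑g) p ≠ p,
      ∀ A : Set X, A.Infinite → ¬ IsSparse G A ] := by
  classical
  tfae_have 1 → 3 := by
    intro h1 A hA hsp
    have hstep : ∀ (L : Finset (Equiv.Perm X)) (D : Set X), InvP G A L D →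
        ∃ t : Equiv.Perm X × Finset (Equiv.Perm X) × Set X, t.1 ∈ G ∧ t.1 ∉ L ∧ t.2.2 ⊆ D ∧
          (∀ σ, σ ∈ t.2.1 ↔ σ = t.1 ∨ σ ∈ L) ∧ InvP G A t.2.1 t.2.2 :=
      fun L D h => step_lemma h1 h
    choose! next hnextG hnextL hnextD hnextMem hnextInv using hstep
    set step : Finset (Equiv.Perm X) × Set X → Finset (Equiv.Perm X) × Set X :=
      fun s => ((next s.1 s.2).2.1, (next s.1 s.2).2.2) with hstepdef
    set seq : ℕ → Finset (Equiv.Perm X) × Set X := fun n => step^[n] (∅, A) with hseq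
    set L : ℕ → Finset (Equiv.Perm X) := fun n => (seq n).1 with hLdef
    set D : ℕ → Set X := fun n => (seq n).2 with hDdef
    set gs : ℕ → Equiv.Perm X := fun n => (next (L n) (D n)).1 with hgs
    have hsucc : ∀ n, seq (n + 1) = step (seq n) := fun n => Function.iterate_succ_apply' _ _ _
    have hL1 : ∀ n, L (n + 1) = (next (L n) (D n)).2.1 := fun n => congrArg Prod.fst (hsucc n)
    have hD1 : ∀ n, D (n + 1) = (next (L n) (D n)).2.2 := fun n => congrArg Prod.snd (hsucc n)
    have hInv : ∀ n, InvP G A (L n) (D n) := by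
      intro n
      induction n with
      | zero =>
        refine ⟨hA, subset_rfl, fun σ hσ => absurd hσ (Finset.notMem_empty σ),
          fun σ hσ => absurd hσ (Finset.notMem_empty σ), ?_⟩
        rintro σ τ (rfl | hσ) (rfl | hτ) hne
        · exact absurd rfl hne
        · exact absurd hτ (Finset.notMem_empty τ)
        · exact absurd hσ (Finset.notMem_empty σ)
        · exact absurd hσ (Finset.notMem_empty σ)
      | succ n ih =>
        rw [hL1 n, hD1 n]
        exact hnextInv (L n) (D n) ih
    have hDsub : ∀ n, D (n + 1) ⊆ D n := fun n => by
      rw [hD1 n]; exact hnextD _ _ (hInv n)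
    have hgsG : ∀ n, gs n ∈ G := fun n => hnextG _ _ (hInv n)
    have hgsL : ∀ n, gs n ∉ L n := fun n => hnextL _ _ (hInv n)
    have hMem : ∀ n σ, σ ∈ L (n + 1) ↔ σ = gs n ∨ σ ∈ L n := fun n σ => by
      rw [hL1 n]; exact hnextMem _ _ (hInv n) σ
    have hLmono : ∀ m n, m ≤ n → L m ⊆ L n := fun m n h =>
      monotone_nat_of_le_succ (fun k σ hσ => (hMem k σ).mpr (Or.inr hσ)) h
    have hcard : ∀ n, (L n).card = n := by
      intro n
      induction n with
      | zero => rfl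
      | succ n ih =>
        have hins : L (n + 1) = insert (gs n) (L n) := Finset.ext fun σ => by
          rw [hMem n σ, Finset.mem_insert]
        rw [hins, Finset.card_insert_of_notMem (hgsL n), ih]
    obtain ⟨p, hfree, hDp⟩ := exists_free_ultrafilter_forall (fun n => (hInv n).1) hDsub
    set BigL : Set (Equiv.Perm X) := ⋃ n, (L n : Set (Equiv.Perm X)) with hBigL
    have hBigLinf : BigL.Infinite := by
      intro hfin
      have hsub : ∀ n, (L n : Set (Equiv.Perm X)) ⊆ BigL := fun n =>
        Set.subset_iUnion (fun k => ((L k : Set (Equiv.Perm X)))) n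
      have hcard2 : ∀ n : ℕ, n ≤ hfin.toFinset.card := by
        intro n
        rw [← hcard n]
        apply Finset.card_le_card
        intro x hx
        rw [Set.Finite.mem_toFinset]
        exact hsub n hx
      exact absurd (hcard2 (hfin.toFinset.card + 1)) (by omega)
    have hinjOn : Set.InjOn (fun σ : Equiv.Perm X => Ultrafilter.map (⇑σ) p) BigL := by
      intro σ hσ τ hτ heq0
      have heq : Ultrafilter.map (⇑σ) p = Ultrafilter.map (⇑τ) p := heq0
      by_contra hne
      obtain ⟨m, hσm⟩ := Set.mem_iUnion.mp hσ
      obtain ⟨n, hτn⟩ := Set.mem_iUnion.mp hτ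
      have hσk : σ ∈ L (max m n) := hLmono m (max m n) (le_max_left m n) hσm
      have hτk : τ ∈ L (max m n) := hLmono n (max m n) (le_max_right m n) hτn
      have hd := (hInv (max m n)).2.2.2.2 σ τ (Or.inr hσk) (Or.inr hτk) hne
      have h1 : (⇑σ) '' (D (max m n)) ∈ Ultrafilter.map (⇑σ) p := by
        rw [Ultrafilter.mem_map]
        exact Filter.mem_of_superset (hDp (max m n)) (Set.subset_preimage_image _ _)
      have h2 : (⇑τ) '' (D (max m n)) ∈ Ultrafilter.map (⇑σ) p := by
        rw [heq, Ultrafilter.mem_map]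
        exact Filter.mem_of_superset (hDp (max m n)) (Set.subset_preimage_image _ _)
      obtain ⟨x, hx1, hx2⟩ := Ultrafilter.nonempty_of_mem (Filter.inter_mem h1 h2)
      exact Set.disjoint_left.mp hd hx1 hx2
    have hcompan : (fun σ : Equiv.Perm X => Ultrafilter.map (⇑σ) p) '' BigL ⊆ compan G p A := by
      rintro q ⟨σ, hσ, rfl⟩
      obtain ⟨n, hσn⟩ := Set.mem_iUnion.mp hσ
      have hσn' : σ ∈ L n := Finset.mem_coe.mp hσn
      refine ⟨?_, ⟨σ, (hInv n).2.2.1 σ hσn', rfl⟩⟩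
      rw [Ultrafilter.mem_map]
      exact Filter.mem_of_superset (hDp n)
        (fun x hx => (hInv n).2.2.2.1 σ hσn' (Set.mem_image_of_mem _ hx))
    exact ((hBigLinf.image hinjOn).mono hcompan) (hsp p hfree)
  tfae_have 3 → 2 := by
    intro h3 A hA
    have hns := h3 A hA
    rw [IsSparse] at hns
    push_neg at hns
    obtain ⟨p, hfree, hinf⟩ := hns
    have hinf' : (compan G p A).Infinite := hinf
    obtain ⟨q₁, hq₁, q₂, hq₂, hq12⟩ := hinf'.nontrivial
    obtain ⟨hA1, g₁, hg₁G, rfl⟩ := hq₁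
    obtain ⟨hA2, g₂, hg₂G, hq2eq⟩ := hq₂
    have hcomp : Ultrafilter.map (⇑(g₂ * g₁⁻¹)) (Ultrafilter.map (⇑g₁) p) =
        Ultrafilter.map (⇑g₂) p := by
      rw [Ultrafilter.map_map]
      congr 1
      funext x
      simp
    refine ⟨Ultrafilter.map (⇑g₁) p, isFree_map hfree, g₂ * g₁⁻¹,
      mul_mem hg₂G (inv_mem hg₁G), hA1, ?_, ?_⟩
    · rw [hcomp, ← hq2eq]; exact hA2
    · rw [hcomp, ← hq2eq]; exact hq12.symm
  tfae_have 2 → 1 := by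
    intro h2 A hAinf hThin
    obtain ⟨p, hfree, g, hgG, hAp, hAgp, hne⟩ := h2 A hAinf
    have hE : entourage (↑({1, g} : Finset (Equiv.Perm X))) ∈ XGsets G := by
      refine ⟨fun x => ⟨1, by simp, by simp⟩, {1, g}, by simp, ?_, subset_rfl⟩
      intro σ hσ
      simp only [Finset.coe_insert, Finset.coe_singleton, Set.mem_insert_iff,
        Set.mem_singleton_iff] at hσ
      rcases hσ with rfl | rfl
      · exact one_mem G
      · exact hgG
    obtain ⟨B₀, hB₀fin, hB₀⟩ := hThin _ hE
    have hgA : (⇑g) ⁻¹' A ∈ p := Ultrafilter.mem_map.mp hAgp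
    have hB₀c : B₀ᶜ ∈ p := hfree hB₀fin.compl_mem_cofinite
    have hC : (A ∩ (⇑g) ⁻¹' A) ∩ B₀ᶜ ∈ p := Filter.inter_mem (Filter.inter_mem hAp hgA) hB₀c
    have hfix : {x | g x = x} ∈ p := by
      refine Filter.mem_of_superset hC ?_
      rintro a ⟨⟨ha1, ha2⟩, ha3⟩
      have hball := hB₀ a ⟨ha1, ha3⟩
      have hga : g a ∈ ball (entourage (↑({1, g} : Finset (Equiv.Perm X)))) ({a} : Set X) ∩ A :=
        ⟨⟨a, Set.mem_singleton a, ⟨g, by simp, rfl⟩⟩, ha2⟩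
      rw [hball] at hga
      exact hga
    exact hne (map_eq_of_fixed hfix)
  tfae_finish
end
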